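/- Triangle inequality part of Theorem 4.1, general case: with the admissibility structure fixed, for every real q ≥ 1 and families f, g, h : ι → ℝ⁴ with level maps ℓ_f, ℓ_g, ℓ_h : ι → Λ and contour maps φ_f, φ_g, φ_h : ι → P, one has d_{W,q}(f, h) ≤ d_{W,q}(f, g) + d_{W,q}(g, h) in [0, ∞]. (The proof composes admissible permutations and applies Minkowski's inequality to the resulting ℓ^q cost sums.) -/
import Mathlib


open scoped ENNReal

/-- A permutation `σ` is admissible from `(f, ℓf, φf)` to `(g, ℓg, φg)` if it preserves
levels (`ℓg ∘ σ = ℓf`) and maps contours to contours via some bijection `β`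
(`φg ∘ σ = β ∘ φf`), modelling the matching criteria (C1)–(C3). -/
def Admissible {ι Λ P : Type*} (ℓf : ι → Λ) (φf : ι → P)
    (ℓg : ι → Λ) (φg : ι → P) (σ : Equiv.Perm ι) : Prop :=
  ℓg ∘ σ = ℓf ∧ ∃ β : P ≃ P, φg ∘ σ = β ∘ φf

/-- The constrained `q`-Wasserstein distance between labelled families of points of
`ℝ⁴ = (Fin 4 → ℝ)` (sup norm), in `[0, ∞]`: the infimum over admissible permutations
of `(∑ i, ‖f i - g (σ i)‖ ^ q) ^ (1/q)`, with value `∞` if no admissible permutation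
exists. -/
noncomputable def dWq {ι Λ P : Type*} [Fintype ι] (q : ℝ)
    (f : ι → Fin 4 → ℝ) (ℓf : ι → Λ) (φf : ι → P)
    (g : ι → Fin 4 → ℝ) (ℓg : ι → Λ) (φg : ι → P) : ℝ≥0∞ :=
  ⨅ σ : Equiv.Perm ι, ⨅ _ : Admissible ℓf φf ℓg φg σ,
    (∑ i, (‖f i - g (σ i)‖₊ : ℝ≥0∞) ^ q) ^ (1 / q)

/-- Triangle inequality part of Theorem 4.1 for general `q ≥ 1`. -/
theorem dWq_triangle {ι Λ P : Type*} [Fintype ι] (q : ℝ) (hq : 1 ≤ q)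
    (f g h : ι → Fin 4 → ℝ) (ℓf ℓg ℓh : ι → Λ) (φf φg φh : ι → P) :
    dWq q f ℓf φf h ℓh φh ≤ dWq q f ℓf φf g ℓg φg + dWq q g ℓg φg h ℓh φh := by
  have hq0 : 0 < q := lt_of_lt_of_le one_pos hq
  simp only [dWq]
  rw [ENNReal.iInf_add]
  refine le_iInf fun σ₁ => ?_
  rw [ENNReal.iInf_add]
  refine le_iInf fun h₁ => ?_
  rw [ENNReal.add_iInf]
  refine le_iInf fun σ₂ => ?_
  rw [ENNReal.add_iInf]
  refine le_iInf fun h₂ => ?_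
  have hadm : Admissible ℓf φf ℓh φh (σ₁.trans σ₂) := by
    obtain ⟨hl1, β₁, hb1⟩ := h₁
    obtain ⟨hl2, β₂, hb2⟩ := h₂
    refine ⟨?_, β₁.trans β₂, ?_⟩
    · funext i
      have := congrFun hl2 (σ₁ i)
      simp only [Function.comp_apply] at this ⊢
      rw [Equiv.trans_apply, this]
      exact congrFun hl1 i
    · funext i
      have t2 := congrFun hb2 (σ₁ i)
      have t1 := congrFun hb1 i
      simp only [Function.comp_apply] at t1 t2 ⊢
      rw [Equiv.trans_apply, t2, t1, Equiv.trans_apply]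
  refine le_trans (iInf_le _ (σ₁.trans σ₂)) (le_trans (iInf_le _ hadm) ?_)
  -- pointwise triangle then Minkowski
  have key : (∑ i, (‖f i - h ((σ₁.trans σ₂) i)‖₊ : ℝ≥0∞) ^ q) ^ (1 / q) ≤
      (∑ i, ((‖f i - g (σ₁ i)‖₊ : ℝ≥0∞) + (‖g (σ₁ i) - h (σ₂ (σ₁ i))‖₊ : ℝ≥0∞)) ^ q) ^ (1 / q) := by
    refine ENNReal.rpow_le_rpow ?_ (by positivity)
    refine Finset.sum_le_sum fun i _ => ?_
    refine ENNReal.rpow_le_rpow ?_ hq0.le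
    have : ‖f i - h ((σ₁.trans σ₂) i)‖₊ ≤ ‖f i - g (σ₁ i)‖₊ + ‖g (σ₁ i) - h (σ₂ (σ₁ i))‖₊ := by
      have := nnnorm_add_le (f i - g (σ₁ i)) (g (σ₁ i) - h (σ₂ (σ₁ i)))
      simpa [Equiv.trans_apply, sub_add_sub_cancel] using this
    exact_mod_cast this
  refine key.trans ?_
  refine (ENNReal.Lp_add_le Finset.univ _ _ hq).trans ?_
  have hre : ∑ i, (‖g (σ₁ i) - h (σ₂ (σ₁ i))‖₊ : ℝ≥0∞) ^ q
      = ∑ j, (‖g j - h (σ₂ j)‖₊ : ℝ≥0∞) ^ q :=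
    Equiv.sum_comp σ₁ (fun j => (‖g j - h (σ₂ j)‖₊ : ℝ≥0∞) ^ q)
  rw [hre]
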